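/- Define polynomials p_n by p_0(x) = 1 and p_{n+1}(x) = x^2 * p_n''(x) + x*(1 - 2x) * p_n'(x) - x * p_n(x). Then for all n >= 0 and all x, y: p_n(x+y) = sum over k from 0 to n of binomial(2n, 2k) * p_k(x) * p_{n-k}(y). -/

import Mathlib

open Polynomial

/-- The Sheffer-type polynomial sequence `p₀ = 1`,
`p_{n+1}(x) = x² pₙ″(x) + x(1 - 2x) pₙ′(x) - x pₙ(x)`. -/
noncomputable def KLpoly : ℕ → Polynomial ℤ
  | 0 => 1
  | n + 1 =>
      X ^ 2 * derivative (derivative (KLpoly n)) +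
        X * (1 - 2 * X) * derivative (KLpoly n) - X * KLpoly n

open scoped PowerSeries

noncomputable def Ee (a : ℚ) : PowerSeries ℚ := PowerSeries.rescale a (PowerSeries.exp ℚ)

lemma coeff_Ee (a : ℚ) (n : ℕ) : PowerSeries.coeff n (Ee a) = a ^ n / n.factorial := by
  simp [Ee, PowerSeries.coeff_rescale, PowerSeries.coeff_exp]
  ring

lemma Ee_mul_Ee : Ee 1 * Ee (-1) = 1 := by
  simpa [Ee] using PowerSeries.exp_mul_exp_eq_exp_add (1 : ℚ) (-1)

noncomputable def hh : PowerSeries ℚ := PowerSeries.C (R := ℚ) (1/2) * (Ee 1 + Ee (-1)) - 1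

noncomputable def sh : PowerSeries ℚ := PowerSeries.C (R := ℚ) (1/2) * (Ee 1 - Ee (-1))

lemma deriv_Ee (a : ℚ) : d⁄dX ℚ (Ee a) = PowerSeries.C (R := ℚ) a * Ee a := by
  ext n
  simp [PowerSeries.coeff_derivative, coeff_Ee, Nat.factorial_succ, pow_succ]
  field_simp

lemma deriv_hh : d⁄dX ℚ hh = sh := by
  simp [hh, sh, Derivation.leibniz, deriv_Ee]
  ring

lemma deriv_sh : d⁄dX ℚ sh = hh + 1 := by
  simp [hh, sh, Derivation.leibniz, deriv_Ee]

lemma sh_sq : sh ^ 2 = hh ^ 2 + 2 * hh := by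
  have h' : 4 * (PowerSeries.C (R := ℚ) (1/2) * PowerSeries.C (R := ℚ) (1/2)) * (Ee 1 * Ee (-1)) = 1 := by
    rw [Ee_mul_Ee, mul_one, ← map_mul, ← map_ofNat (PowerSeries.C (R := ℚ)) 4, ← map_mul]
    norm_num
  simp only [hh, sh]
  linear_combination -h'

lemma deriv2_hh_pow (a : ℕ) :
    d⁄dX ℚ (d⁄dX ℚ (hh ^ (a+1))) =
      (((a+1)^2 : ℕ) : ℚ⟦X⟧) * hh ^ (a+1) + (((a+1)*(2*a+1) : ℕ) : ℚ⟦X⟧) * hh ^ a := by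
  have h1 : d⁄dX ℚ (hh ^ (a+1)) = ((a+1 : ℕ) : ℚ⟦X⟧) * (hh ^ a * sh) := by
    rw [Derivation.leibniz_pow, deriv_hh, nsmul_eq_mul]
    push_cast; simp only [smul_eq_mul, Nat.add_sub_cancel]
  have hC : (d⁄dX ℚ) ((a+1 : ℕ) : ℚ⟦X⟧) = 0 := by
    rw [← map_natCast (PowerSeries.C (R := ℚ)) (a+1)]; simp
  rw [h1, Derivation.leibniz, hC]
  simp only [smul_eq_mul, mul_zero, add_zero, zero_add]
  rw [Derivation.leibniz, deriv_sh, Derivation.leibniz_pow, deriv_hh, nsmul_eq_mul]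
  simp only [smul_eq_mul, Nat.add_sub_cancel]
  rcases a with _ | b
  · push_cast; ring
  · push_cast
    linear_combination (((b:ℚ⟦X⟧)+1+1)*((b:ℚ⟦X⟧)+1)*hh^b) * sh_sq

lemma coeff_hh_odd {n : ℕ} (h : Odd n) : PowerSeries.coeff n hh = 0 := by
  have hn : n ≠ 0 := by rintro rfl; simp at h
  obtain ⟨k, rfl⟩ := h
  rw [hh]
  simp only [map_sub, map_add, PowerSeries.coeff_C_mul, coeff_Ee, PowerSeries.coeff_one, hn,
    if_false]
  rw [pow_succ, pow_mul]
  norm_num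
  rw [div_eq_mul_inv]
  ring
  simp [mul_comm k 2, pow_mul]

lemma coeff_hh_zero : PowerSeries.coeff 0 hh = 0 := by
  rw [hh]
  simp only [map_sub, map_add, PowerSeries.coeff_C_mul, coeff_Ee, PowerSeries.coeff_one]
  norm_num

lemma coeff_hh_one : PowerSeries.coeff 1 hh = 0 := coeff_hh_odd odd_one

lemma coeff_pow_odd (a : ℕ) : ∀ {m : ℕ}, Odd m → PowerSeries.coeff m (hh ^ a) = 0 := by
  induction a with
  | zero => intro m hm
            have : m ≠ 0 := by rintro rfl; simp at hm
            simp [PowerSeries.coeff_one, this]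
  | succ b ih =>
      intro m hm
      rw [pow_succ, PowerSeries.coeff_mul]
      apply Finset.sum_eq_zero
      rintro ⟨i, j⟩ hij
      rw [Finset.HasAntidiagonal.mem_antidiagonal] at hij
      rcases Nat.even_or_odd j with hj | hj
      · have : Odd i := by
          rcases hj with ⟨c, rfl⟩
          rcases hm with ⟨d, hd⟩
          exact ⟨d - c, by omega⟩
        rw [ih this, zero_mul]
      · rw [coeff_hh_odd hj, mul_zero]

lemma coeff_pow_lt (a : ℕ) : ∀ {m : ℕ}, m < 2 * a → PowerSeries.coeff m (hh ^ a) = 0 := by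
  induction a with
  | zero => intro m hm; omega
  | succ b ih =>
      intro m hm
      rw [pow_succ, PowerSeries.coeff_mul]
      apply Finset.sum_eq_zero
      rintro ⟨i, j⟩ hij
      rw [Finset.HasAntidiagonal.mem_antidiagonal] at hij
      rcases Nat.lt_or_ge j 2 with hj | hj
      · interval_cases j
        · rw [coeff_hh_zero, mul_zero]
        · rw [coeff_hh_one, mul_zero]
      · rw [ih (show i < 2 * b by omega), zero_mul]

lemma coeff_natCast_mul (m k : ℕ) (f : ℚ⟦X⟧) :
    PowerSeries.coeff k ((m : ℚ⟦X⟧) * f) = m * PowerSeries.coeff k f := by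
  rw [← map_natCast (PowerSeries.C (R := ℚ)) m, PowerSeries.coeff_C_mul]

noncomputable def qc (n j : ℕ) : ℚ :=
  (-1)^j * (2*n).factorial * PowerSeries.coeff (2*n) (hh ^ j) / j.factorial

lemma qc_zero_zero : qc 0 0 = 1 := by simp [qc]

lemma qc_eq_zero_of_lt {n j : ℕ} (h : n < j) : qc n j = 0 := by
  rw [qc, coeff_pow_lt j (by omega)]
  simp

lemma qc_succ_zero (n : ℕ) : qc (n+1) 0 = 0 := by
  rw [qc]
  simp [PowerSeries.coeff_one]

lemma qc_mul_factorial (m j : ℕ) :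
    qc m j * j.factorial = (-1)^j * (2*m).factorial * PowerSeries.coeff (2*m) (hh ^ j) := by
  rw [qc, div_mul_cancel₀]
  exact_mod_cast Nat.factorial_ne_zero j

lemma qc_rec (n j : ℕ) :
    qc (n+1) (j+1) = ((j:ℚ)+1)^2 * qc n (j+1) - (2*(j:ℚ)+1) * qc n j := by
  have hode := congrArg (PowerSeries.coeff (2*n)) (deriv2_hh_pow j)
  rw [PowerSeries.coeff_derivative, PowerSeries.coeff_derivative, map_add,
    coeff_natCast_mul, coeff_natCast_mul] at hode
  have h2 : 2*n+1+1 = 2*(n+1) := by ring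
  rw [h2] at hode
  push_cast at hode
  have hfj1 : (((j+1).factorial : ℚ)) ≠ 0 := by exact_mod_cast Nat.factorial_ne_zero _
  apply mul_right_cancel₀ hfj1
  have e2 : ((j+1).factorial : ℚ) = (j.factorial) * ((j:ℚ)+1) := by
    rw [Nat.factorial_succ]; push_cast; ring
  have step : (((j:ℚ)+1)^2 * qc n (j+1) - (2*(j:ℚ)+1) * qc n j) * ((j+1).factorial : ℚ)
      = ((j:ℚ)+1)^2 * (qc n (j+1) * ((j+1).factorial : ℚ))
        - (2*(j:ℚ)+1) * (qc n j * (j.factorial : ℚ)) * ((j:ℚ)+1) := by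
    rw [e2]; ring
  rw [step, qc_mul_factorial, qc_mul_factorial, qc_mul_factorial]
  have e1 : ((2*(n+1)).factorial : ℚ) = (2*n).factorial * (2*(n:ℚ)+1) * (2*(n:ℚ)+2) := by
    have h3 : 2*(n+1) = (2*n+1)+1 := by ring
    rw [h3, Nat.factorial_succ, Nat.factorial_succ]
    push_cast; ring
  rw [e1]
  linear_combination ((-1)^(j+1) * ((2*n).factorial : ℚ)) * hode

lemma sum_even (N : ℕ) (f : ℕ → ℚ) (hf : ∀ i, Odd i → f i = 0) :
    ∑ i ∈ Finset.range (2*N+1), f i = ∑ k ∈ Finset.range (N+1), f (2*k) := by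
  induction N with
  | zero => simp
  | succ M ih =>
      have h1 : 2*(M+1)+1 = (2*M+1)+1+1 := by ring
      rw [h1, Finset.sum_range_succ, Finset.sum_range_succ, ih,
        Finset.sum_range_succ (fun k => f (2*k)) (M+1)]
      rw [hf (2*M+1) ⟨M, by ring⟩]
      have h2 : 2*M+1+1 = 2*(M+1) := by ring
      rw [h2]
      ring

lemma conv (n a b : ℕ) :
    PowerSeries.coeff (2*n) (hh^(a+b)) =
      ∑ k ∈ Finset.range (n+1), PowerSeries.coeff (2*k) (hh^a) * PowerSeries.coeff (2*(n-k)) (hh^b) := by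
  rw [pow_add, PowerSeries.coeff_mul, Finset.Nat.sum_antidiagonal_eq_sum_range_succ_mk]
  calc ∑ i ∈ Finset.range (2*n+1), PowerSeries.coeff i (hh^a) * PowerSeries.coeff (2*n - i) (hh^b)
      = ∑ k ∈ Finset.range (n+1), PowerSeries.coeff (2*k) (hh^a) * PowerSeries.coeff (2*n - 2*k) (hh^b) :=
        sum_even n _ (fun i hi => by rw [coeff_pow_odd a hi, zero_mul])
    _ = ∑ k ∈ Finset.range (n+1), PowerSeries.coeff (2*k) (hh^a) * PowerSeries.coeff (2*(n-k)) (hh^b) := by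
        apply Finset.sum_congr rfl
        intro k hk
        have h4 : 2*n - 2*k = 2*(n-k) := by omega
        rw [h4]

lemma term_eq (n a b k : ℕ) (hk : k ≤ n) :
    ((2*n).choose (2*k) : ℚ) * qc k a * qc (n-k) b =
      ((a+b).choose a : ℚ) * (-1)^(a+b) * (2*n).factorial / (a+b).factorial *
        (PowerSeries.coeff (2*k) (hh^a) * PowerSeries.coeff (2*(n-k)) (hh^b)) := by
  have hc1 : ((2*n).choose (2*k) : ℚ) * (2*k).factorial * (2*(n-k)).factorial
      = (2*n).factorial := by
    have h2 : 2*(n-k) = 2*n - 2*k := by omega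
    rw [h2]
    exact_mod_cast Nat.choose_mul_factorial_mul_factorial (by omega : 2*k ≤ 2*n)
  have hc2 : ((a+b).choose a : ℚ) * a.factorial * b.factorial = (a+b).factorial := by
    have h3 : b = (a+b) - a := by omega
    calc ((a+b).choose a : ℚ) * a.factorial * b.factorial
        = ((a+b).choose a) * a.factorial * ((a+b)-a).factorial := by rw [← h3]
      _ = (a+b).factorial := by
          exact_mod_cast Nat.choose_mul_factorial_mul_factorial (by omega : a ≤ a+b)
  have hfa : ((a.factorial : ℚ)) ≠ 0 := by exact_mod_cast Nat.factorial_ne_zero _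
  have hfb : ((b.factorial : ℚ)) ≠ 0 := by exact_mod_cast Nat.factorial_ne_zero _
  have hfab : (((a+b).factorial : ℚ)) ≠ 0 := by exact_mod_cast Nat.factorial_ne_zero _
  rw [qc, qc]
  field_simp
  linear_combination ((-1)^a * (-1)^b * PowerSeries.coeff (2*k) (hh^a) * PowerSeries.coeff (2*(n-k)) (hh^b) *
      (((a+b).factorial : ℚ))) * hc1 -
    ((-1)^a * (-1)^b * PowerSeries.coeff (2*k) (hh^a) * PowerSeries.coeff (2*(n-k)) (hh^b) *
      (((2*n).factorial : ℚ))) * hc2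

lemma key (n a b : ℕ) :
    ∑ k ∈ Finset.range (n+1), ((2*n).choose (2*k) : ℚ) * qc k a * qc (n-k) b =
      ((a+b).choose a : ℚ) * qc n (a+b) := by
  rw [Finset.sum_congr rfl (fun k hk => term_eq n a b k (Finset.mem_range_succ_iff.mp hk))]
  rw [← Finset.mul_sum, ← conv, qc]
  ring

lemma derivC (q : ℚ) (m : ℕ) :
    derivative (C q * X^m) = C (q * m) * X^(m-1) := by
  rw [derivative_C_mul, derivative_X_pow, ← mul_assoc, ← map_mul]

lemma term_poly (q : ℚ) (j : ℕ) :
    X^2 * derivative (derivative (C q * X^j)) + X*(1-2*X)*derivative (C q * X^j)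
      - X*(C q * X^j)
    = C (q * (j:ℚ)^2) * X^j - C (q*(2*(j:ℚ)+1)) * X^(j+1) := by
  rcases j with _ | _ | i
  · simp
  · simp [derivative_C_mul, map_ofNat]
    ring
  · rw [derivC, Nat.add_sub_cancel, derivC, Nat.add_sub_cancel]
    push_cast
    simp only [map_mul, map_pow, map_add, map_natCast, map_ofNat, map_one]
    ring

lemma KL_eq (n : ℕ) : (KLpoly n).map (algebraMap ℤ ℚ) =
    ∑ j ∈ Finset.range (n+1), C (qc n j) * X^j := by
  induction n with
  | zero => simp [KLpoly, qc_zero_zero]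
  | succ n ih =>
    rw [show KLpoly (n+1) = X ^ 2 * derivative (derivative (KLpoly n)) +
        X * (1 - 2 * X) * derivative (KLpoly n) - X * KLpoly n from rfl]
    simp only [Polynomial.map_add, Polynomial.map_sub, Polynomial.map_mul, Polynomial.map_pow,
      Polynomial.map_X, Polynomial.map_one, Polynomial.map_ofNat, ← derivative_map, ih]
    have expand : X^2 * derivative (derivative (∑ j ∈ Finset.range (n+1), C (qc n j) * X^j)) +
        X*(1-2*X)*derivative (∑ j ∈ Finset.range (n+1), C (qc n j) * X^j) -
        X*(∑ j ∈ Finset.range (n+1), C (qc n j) * X^j)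
        = ∑ j ∈ Finset.range (n+1), (X^2 * derivative (derivative (C (qc n j) * X^j)) +
            X*(1-2*X)*derivative (C (qc n j) * X^j) - X*(C (qc n j) * X^j)) := by
      simp only [derivative_sum, Finset.mul_sum, ← Finset.sum_sub_distrib,
        ← Finset.sum_add_distrib]
    rw [expand, Finset.sum_congr rfl (fun j _ => term_poly (qc n j) j),
      Finset.sum_sub_distrib]
    have hsplit : ∀ i : ℕ, C (qc (n+1) (i+1)) * X^(i+1)
        = C (((i:ℚ)+1)^2 * qc n (i+1)) * X^(i+1) - C (qc n i * (2*(i:ℚ)+1)) * X^(i+1) := by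
      intro i
      rw [qc_rec n i, show (2*(i:ℚ)+1) * qc n i = qc n i * (2*(i:ℚ)+1) from mul_comm _ _,
        map_sub, sub_mul]
    have hA : (∑ i ∈ Finset.range (n+1), C (((i:ℚ)+1)^2 * qc n (i+1)) * X^(i+1))
        = ∑ j ∈ Finset.range (n+1), C (qc n j * (j:ℚ)^2) * X^j := by
      rw [Finset.sum_range_succ' (fun j => C (qc n j * (j:ℚ)^2) * X^j) n,
        Finset.sum_range_succ (fun i => C (((i:ℚ)+1)^2 * qc n (i+1)) * X^(i+1)) n]
      simp only [qc_eq_zero_of_lt (Nat.lt_succ_self n), mul_zero, zero_mul, map_zero,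
        Nat.cast_zero, add_zero, pow_zero, mul_one, zero_pow, ne_eq, OfNat.ofNat_ne_zero,
        not_false_eq_true]
      apply Finset.sum_congr rfl
      intro k _
      have : qc n (k+1) * ((k+1 : ℕ):ℚ)^2 = ((k:ℚ)+1)^2 * qc n (k+1) := by push_cast; ring
      rw [this]
    have hT : (∑ j ∈ Finset.range (n+1+1), C (qc (n+1) j) * X^j)
        = (∑ j ∈ Finset.range (n+1), C (qc n j * (j:ℚ)^2) * X^j)
          - ∑ j ∈ Finset.range (n+1), C (qc n j * (2*(j:ℚ)+1)) * X^(j+1) := by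
      rw [Finset.sum_range_succ' (fun j => C (qc (n+1) j) * X^j) (n+1)]
      simp only [qc_succ_zero, map_zero, zero_mul, add_zero]
      rw [Finset.sum_congr rfl (fun i _ => hsplit i), Finset.sum_sub_distrib, hA]
    rw [hT]

lemma key_real (n a b : ℕ) :
    ∑ k ∈ Finset.range (n+1), ((2*n).choose (2*k) : ℝ) * (qc k a : ℝ) * (qc (n-k) b : ℝ) =
      ((a+b).choose a : ℝ) * (qc n (a+b) : ℝ) := by
  exact_mod_cast congrArg (fun q : ℚ => (q : ℝ)) (key n a b)

lemma qc_real_zero {n j : ℕ} (h : n < j) : (qc n j : ℝ) = 0 := by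
  rw [qc_eq_zero_of_lt h, Rat.cast_zero]

lemma aeval_KL (n : ℕ) (z : ℝ) :
    Polynomial.aeval z (KLpoly n) = ∑ j ∈ Finset.range (n+1), (qc n j : ℝ) * z^j := by
  rw [← Polynomial.aeval_map_algebraMap ℚ z (KLpoly n), KL_eq n]
  simp only [map_sum, map_mul, map_pow, Polynomial.aeval_C, Polynomial.aeval_X]
  simp [eq_ratCast (algebraMap ℚ ℝ)]

theorem KLpoly_add (n : ℕ) (x y : ℝ) :
    Polynomial.aeval (x + y) (KLpoly n) =
      ∑ k ∈ Finset.range (n + 1),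
        (Nat.choose (2 * n) (2 * k) : ℝ) *
          (Polynomial.aeval x (KLpoly k)) * (Polynomial.aeval y (KLpoly (n - k))) := by
  rw [aeval_KL]
  have step1 : ∀ j ∈ Finset.range (n+1), (qc n j : ℝ) * (x+y)^j
      = ∑ a ∈ Finset.range (n+1),
          (qc n j : ℝ) * (x^a * y^(j-a) * (j.choose a : ℝ)) := by
    intro j hj
    rw [add_pow, Finset.mul_sum]
    apply Finset.sum_subset (Finset.range_subset_range.2 (by
      rw [Finset.mem_range] at hj; omega))
    intro a ha hna
    rw [Finset.mem_range] at ha hna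
    have : j.choose a = 0 := Nat.choose_eq_zero_of_lt (by omega)
    simp [this]
  have step2 : ∀ a ∈ Finset.range (n+1),
      (∑ j ∈ Finset.range (n+1), (qc n j : ℝ) * (x^a * y^(j-a) * (j.choose a : ℝ)))
      = ∑ b ∈ Finset.range (n+1),
          (qc n (a+b) : ℝ) * (x^a * y^b * ((a+b).choose a : ℝ)) := by
    intro a _
    set F : ℕ → ℝ := fun j => (qc n j : ℝ) * (x^a * y^(j-a) * (j.choose a : ℝ)) with hF
    have hFn : ∀ j ∈ Finset.range (a+(n+1)), j ∉ Finset.range (n+1) → F j = 0 := by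
      intro j _ hj
      rw [Finset.mem_range] at hj
      simp [hF, qc_real_zero (show n < j by omega)]
    calc (∑ j ∈ Finset.range (n+1), F j)
        = ∑ j ∈ Finset.range (a+(n+1)), F j :=
          Finset.sum_subset (Finset.range_subset_range.2 (by omega)) hFn
      _ = ∑ j ∈ Finset.range a, F j + ∑ j ∈ Finset.Ico a (a+(n+1)), F j :=
          (Finset.sum_range_add_sum_Ico F (by omega)).symm
      _ = ∑ j ∈ Finset.Ico a (a+(n+1)), F j := by
          rw [Finset.sum_eq_zero, zero_add]
          intro j hj
          rw [Finset.mem_range] at hj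
          simp [hF, Nat.choose_eq_zero_of_lt hj]
      _ = ∑ b ∈ Finset.range (a+(n+1)-a), F (a+b) := Finset.sum_Ico_eq_sum_range F a (a+(n+1))
      _ = ∑ b ∈ Finset.range (n+1),
            (qc n (a+b) : ℝ) * (x^a * y^b * ((a+b).choose a : ℝ)) := by
          rw [show a+(n+1)-a = n+1 by omega]
          apply Finset.sum_congr rfl
          intro b _
          simp [hF, Nat.add_sub_cancel_left]
  rw [Finset.sum_congr rfl step1, Finset.sum_comm, Finset.sum_congr rfl step2]
  have rstep1 : ∀ k ∈ Finset.range (n+1),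
      ((2*n).choose (2*k) : ℝ) * Polynomial.aeval x (KLpoly k) *
        Polynomial.aeval y (KLpoly (n-k))
      = ∑ a ∈ Finset.range (n+1), ∑ b ∈ Finset.range (n+1),
          ((2*n).choose (2*k) : ℝ) * (qc k a : ℝ) * (qc (n-k) b : ℝ) * (x^a*y^b) := by
    intro k hk
    rw [Finset.mem_range] at hk
    rw [aeval_KL, aeval_KL]
    have e1 : (∑ j ∈ Finset.range (k+1), (qc k j : ℝ) * x^j)
        = ∑ j ∈ Finset.range (n+1), (qc k j : ℝ) * x^j := by
      apply Finset.sum_subset (Finset.range_subset_range.2 (by omega))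
      intro a _ ha
      rw [Finset.mem_range] at ha
      simp [qc_real_zero (show k < a by omega)]
    have e2 : (∑ j ∈ Finset.range (n-k+1), (qc (n-k) j : ℝ) * y^j)
        = ∑ j ∈ Finset.range (n+1), (qc (n-k) j : ℝ) * y^j := by
      apply Finset.sum_subset (Finset.range_subset_range.2 (by omega))
      intro b _ hb
      rw [Finset.mem_range] at hb
      simp [qc_real_zero (show n-k < b by omega)]
    rw [e1, e2, mul_assoc, Finset.sum_mul_sum, Finset.mul_sum]
    apply Finset.sum_congr rfl
    intro a _
    rw [Finset.mul_sum]
    apply Finset.sum_congr rfl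
    intro b _
    ring
  rw [Finset.sum_congr rfl rstep1]
  have swap : (∑ k ∈ Finset.range (n+1), ∑ a ∈ Finset.range (n+1), ∑ b ∈ Finset.range (n+1),
        ((2*n).choose (2*k) : ℝ) * (qc k a : ℝ) * (qc (n-k) b : ℝ) * (x^a*y^b))
      = ∑ a ∈ Finset.range (n+1), ∑ b ∈ Finset.range (n+1), ∑ k ∈ Finset.range (n+1),
        ((2*n).choose (2*k) : ℝ) * (qc k a : ℝ) * (qc (n-k) b : ℝ) * (x^a*y^b) := by
    rw [Finset.sum_comm]
    exact Finset.sum_congr rfl (fun a _ => Finset.sum_comm)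
  rw [swap]
  apply Finset.sum_congr rfl
  intro a _
  apply Finset.sum_congr rfl
  intro b _
  have hpull : (∑ k ∈ Finset.range (n+1),
      ((2*n).choose (2*k) : ℝ) * (qc k a : ℝ) * (qc (n-k) b : ℝ) * (x^a*y^b))
      = (∑ k ∈ Finset.range (n+1),
      ((2*n).choose (2*k) : ℝ) * (qc k a : ℝ) * (qc (n-k) b : ℝ)) * (x^a*y^b) := by
    rw [Finset.sum_mul]
  rw [hpull, key_real]
  ring
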